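/- (Fusion lemma) Let (T[A_n,α_n])_{n∈ω} be a sequence of trimmed trees such that for every n, [T[A_{n+1},α_{n+1}]] ⊆ [T[A_n,α_n]] and the first n+1 elements of A_{n+1} (in increasing order) coincide with the first n+1 elements of A_n. Then there exist C ∈ [ω]^ω and α ∈ ∏X_i such that [T[C,α]] ⊆ [T[A_n,α_n]] for every n ∈ ω. -/
import Mathlib


open Set Cardinal

/-- The set of branches of the trimmed tree `T[A,α]`:
all `β` agreeing with `α` outside of `A`. -/
def branches (X : ℕ → Type) (A : Set ℕ) (α : ∀ i, X i) : Set (∀ i, X i) :=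
  {β | ∀ n ∉ A, β n = α n}

/-- The family `V` of branch sets of trimmed trees. -/
def treeV (X : ℕ → Type) : Set (Set (∀ i, X i)) :=
  {S | ∃ A α, A.Infinite ∧ S = branches X A α}

/-- `[T]*`: all `β` agreeing with `α` outside of `A`, up to finitely many exceptions. -/
def starBranches (X : ℕ → Type) (A : Set ℕ) (α : ∀ i, X i) : Set (∀ i, X i) :=
  {β | {n | n ∉ A ∧ β n ≠ α n}.Finite}

/-- The family `V*`. -/
def treeVstar (X : ℕ → Type) : Set (Set (∀ i, X i)) :=
  {S | ∃ A α, A.Infinite ∧ S = starBranches X A α}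

/-- The ideal `d⁰(F)`. -/
def d0 {X : ℕ → Type} (F : Set (Set (∀ i, X i))) : Set (Set (∀ i, X i)) :=
  {Y | ∀ W ∈ F, ∃ U ∈ F, U ⊆ W ∧ U ∩ Y = ∅}

/-- `α_s`: overwrite `α` by `s` on `{0,…,n-1}`. -/
def modifySeq (X : ℕ → Type) (n : ℕ) (s α : ∀ i, X i) : ∀ i, X i :=
  fun i => if i < n then s i else α i

/-- `add(d⁰(V))`: the least cardinality of a subfamily of `d⁰(V)` whose union
is not in `d⁰(V)`. -/
noncomputable def addd0 (X : ℕ → Type) : Cardinal :=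
  sInf {c | ∃ G : Set (Set (∀ i, X i)), G ⊆ d0 (treeV X) ∧ ⋃₀ G ∉ d0 (treeV X) ∧ c = #G}

theorem stmt5 (X : ℕ → Type) [∀ i, Nontrivial (X i)]
    (A : ℕ → Set ℕ) (α : ℕ → ∀ i, X i) (hA : ∀ n, (A n).Infinite)
    (hsub : ∀ n, branches X (A (n + 1)) (α (n + 1)) ⊆ branches X (A n) (α n))
    (hnth : ∀ n, ∀ k ≤ n, Nat.nth (· ∈ A (n + 1)) k = Nat.nth (· ∈ A n) k) :
    ∃ (C : Set ℕ) (γ : ∀ i, X i), C.Infinite ∧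
      ∀ n, branches X C γ ⊆ branches X (A n) (α n) := by
  classical
  have hAinf : ∀ n, {x | x ∈ A n}.Infinite := fun n => hA n
  -- α (n+1) agrees with α n off A n
  have hαeq : ∀ n i, i ∉ A n → α (n + 1) i = α n i := by
    intro n i hi
    exact hsub n (fun m _ => rfl) i hi
  -- A decreasing
  have hAsub : ∀ n, A (n + 1) ⊆ A n := by
    intro n i hi
    by_contra hni
    obtain ⟨y, hy⟩ := exists_ne (α (n + 1) i)
    have hβ : Function.update (α (n + 1)) i y ∈ branches X (A (n + 1)) (α (n + 1)) := by
      intro m hm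
      have : m ≠ i := fun h => hm (h ▸ hi)
      simp [Function.update_of_ne this]
    have := hsub n hβ i hni
    rw [Function.update_self] at this
    exact hy (this.trans (hαeq n i hni).symm)
  have hAmono : ∀ {m n}, m ≤ n → A n ⊆ A m := by
    intro m n h
    induction h with
    | refl => exact fun _ h => h
    | step h ih => exact fun x hx => ih (hAsub _ hx)
  -- α stabilizes off A n
  have hαstab : ∀ n m, n ≤ m → ∀ i, i ∉ A n → α m i = α n i := by
    intro n m h
    induction h with
    | refl => intro i _; rfl
    | @step m h ih =>
        intro i hi
        rw [hαeq m i (fun hin => hi (hAmono h hin))]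
        exact ih i hi
  set c : ℕ → ℕ := fun n => Nat.nth (· ∈ A n) n with hc
  have hcnth : ∀ k m, k ≤ m → Nat.nth (· ∈ A m) k = c k := by
    intro k m hkm
    induction hkm with
    | refl => rfl
    | @step m h ih => rw [hnth m k h, ih]
  -- c n ∈ A m for all m
  have hcmem : ∀ n m, c n ∈ A m := by
    intro n m
    rcases le_total n m with h | h
    · have := Nat.nth_mem_of_infinite (hAinf m) n
      rwa [hcnth n m h] at this
    · exact hAmono h (Nat.nth_mem_of_infinite (hAinf n) n)
  -- c strictly monotone
  have hcmono : StrictMono c := by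
    apply strictMono_nat_of_lt_succ
    intro n
    have h1 : Nat.nth (· ∈ A (n + 1)) n < Nat.nth (· ∈ A (n + 1)) (n + 1) :=
      (Nat.nth_lt_nth (hAinf (n + 1))).2 (Nat.lt_succ_self n)
    rwa [hcnth n (n + 1) (Nat.le_succ n)] at h1
  -- i ∉ range c → i ∉ A i
  have hkey : ∀ i, i ∉ Set.range c → i ∉ A i := by
    intro i hir hiA
    set k := Nat.count (· ∈ A i) i with hk
    have hnthk : Nat.nth (· ∈ A i) k = i := Nat.nth_count hiA
    have hki : k ≤ i := by
      by_contra h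
      push_neg at h
      have : k ≤ Nat.nth (· ∈ A i) k := Nat.le_nth (fun hf => absurd hf (hAinf i))
      omega
    exact hir ⟨k, by rw [← hcnth k i hki, hnthk]⟩
  refine ⟨Set.range c, fun i => α i i, Set.infinite_range_of_injective hcmono.injective, ?_⟩
  intro n β hβ i hiA
  have hiC : i ∉ Set.range c := by
    rintro ⟨k, rfl⟩
    exact hiA (hcmem k n)
  rw [hβ i hiC]
  rcases le_total n i with h | h
  · exact hαstab n i h i hiA
  · exact (hαstab i n h i (hkey i hiC)).symm
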